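/- Let (Ω, 𝒜, P) be a probability space and T a finite rooted tree with root v0 and levels α : V → ℝ≥0 satisfying the local Bonferroni condition ∑_{v' ∈ d(v)} α(v') ≤ α(v) for every non-leaf v. For each vertex v let R(v) ∈ 𝒜 be a measurable event (rejection of the hypothesis at v), let t : V → {0,1} be a labeling (truth of the hypothesis at v), and suppose P(R(v)) ≤ α(v) whenever t(v) = 1. Define the CaD rejection event: hypothesis at v is CaD-rejected on outcome ω iff R(v') holds at ω for every ancestor v' of v (including v itself). Then the probability that there exists v with t(v) = 1 whose hypothesis is CaD-rejected is at most α(v0). -/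
import Mathlib


open Function MeasureTheory
open scoped NNReal ENNReal

/-- A finite rooted tree, encoded by a parent function. The root is a fixed
point of `parent`, and iterating `parent` from any vertex reaches the root. -/
structure CaDTree (V : Type) [Fintype V] [DecidableEq V] where
  root : V
  parent : V → V
  parent_root : parent root = root
  reaches_root : ∀ v, ∃ n, parent^[n] v = root

namespace CaDTree

variable {V : Type} [Fintype V] [DecidableEq V] (T : CaDTree V)

/-- `u` is an ancestor of `v` (including `v` itself). -/
def Ancestor (u v : V) : Prop := ∃ n, T.parent^[n] v = u

/-- `u` is a proper ancestor of `v`. -/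
def ProperAncestor (u v : V) : Prop := T.Ancestor u v ∧ u ≠ v

/-- The set of (immediate) children of `v`. -/
def children (v : V) : Finset V :=
  Finset.univ.filter (fun w => T.parent w = v ∧ w ≠ T.root)

/-- A leaf is a vertex without children. -/
def IsLeaf (v : V) : Prop := T.children v = ∅

/-- Depth of a vertex: distance to the root along the parent map. -/
noncomputable def depth (v : V) : ℕ := Nat.find (T.reaches_root v)

/-- The tree is complete of depth `L`: every leaf lies at depth `L`. -/
def CompleteDepth (L : ℕ) : Prop := ∀ v, T.IsLeaf v → T.depth v = L

/-- Local Bonferroni condition for the levels `α`. -/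
def LocalBonferroni (α : V → ℝ≥0) : Prop :=
  ∀ v, ¬ T.IsLeaf v → ∑ w ∈ T.children v, α w ≤ α v

/-- The first-true set of a labeling: vertices labeled `true` all of whose
proper ancestors are labeled `false`. -/
noncomputable def firstTrue (t : V → Bool) : Finset V :=
  letI := Classical.decPred (fun v => t v = true ∧ ∀ u, T.ProperAncestor u v → t u = false)
  Finset.univ.filter (fun v => t v = true ∧ ∀ u, T.ProperAncestor u v → t u = false)

/-- An antichain: no vertex of `A` is an ancestor of another vertex of `A`. -/
def IsAntichainTree (A : Finset V) : Prop :=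
  ∀ u ∈ A, ∀ v ∈ A, u ≠ v → ¬ T.Ancestor u v

-- auxiliary
noncomputable def desc (v : V) : Finset V :=
  @Finset.filter V (fun u => T.Ancestor v u) (Classical.decPred _) Finset.univ

lemma mem_desc {v u : V} : u ∈ T.desc v ↔ T.Ancestor v u := by
  have h := @Finset.mem_filter V (fun u => T.Ancestor v u) (Classical.decPred _) Finset.univ u
  simp only [Finset.mem_univ, true_and] at h
  exact h

lemma ancestor_refl (v : V) : T.Ancestor v v := ⟨0, rfl⟩

lemma ancestor_trans {u v w : V} (h1 : T.Ancestor u v) (h2 : T.Ancestor v w) :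
    T.Ancestor u w := by
  obtain ⟨m, hm⟩ := h1; obtain ⟨n, hn⟩ := h2
  exact ⟨m + n, by rw [Function.iterate_add_apply, hn, hm]⟩

lemma iterate_parent_root (n : ℕ) : T.parent^[n] T.root = T.root :=
  Function.iterate_fixed T.parent_root n

lemma depth_spec (v : V) : T.parent^[T.depth v] v = T.root := Nat.find_spec (T.reaches_root v)

lemma depth_eq_zero {v : V} : T.depth v = 0 ↔ v = T.root := by
  constructor
  · intro h; have := T.depth_spec v; rwa [h] at this
  · intro h; subst h
    exact (Nat.find_eq_zero (T.reaches_root T.root)).mpr rfl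

lemma depth_lt {u v : V} (h : T.Ancestor u v) (hne : u ≠ v) : T.depth u < T.depth v := by
  obtain ⟨n, hn⟩ := h
  have hn0 : n ≠ 0 := by rintro rfl; exact hne hn.symm
  by_cases hle : T.depth v ≤ n
  · have hu : u = T.root := by
      rw [← hn, ← Nat.sub_add_cancel hle, Function.iterate_add_apply, T.depth_spec,
        T.iterate_parent_root]
    have hv : T.depth v ≠ 0 := fun h0 => hne (by rw [hu, ← T.depth_eq_zero.mp h0])
    have h0 : T.depth u = 0 := by rw [hu]; exact T.depth_eq_zero.mpr rfl
    omega
  · push_neg at hle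
    have hit : T.parent^[T.depth v - n] u = T.root := by
      rw [← hn, ← Function.iterate_add_apply, Nat.sub_add_cancel hle.le, T.depth_spec]
    have h2 : T.depth u ≤ T.depth v - n := Nat.find_le hit
    omega

lemma mem_children {v w : V} : w ∈ T.children v ↔ T.parent w = v ∧ w ≠ T.root := by
  simp [children]

lemma child_depth {v w : V} (h : w ∈ T.children v) : T.depth w = T.depth v + 1 := by
  obtain ⟨hp, hr⟩ := T.mem_children.mp h
  have h1 : T.depth w ≤ T.depth v + 1 := by
    apply Nat.find_le
    rw [Function.iterate_succ_apply, hp]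
    exact T.depth_spec v
  have h0 : T.depth w ≠ 0 := fun h0 => hr (T.depth_eq_zero.mp h0)
  obtain ⟨m, hm⟩ := Nat.exists_eq_succ_of_ne_zero h0
  have h2 : T.parent^[m] v = T.root := by
    have hs := T.depth_spec w
    rwa [hm, Function.iterate_succ_apply, hp] at hs
  have h3 : T.depth v ≤ m := Nat.find_le h2
  omega

lemma ancestor_of_child {v w : V} (h : w ∈ T.children v) : T.Ancestor v w :=
  ⟨1, by simpa using (T.mem_children.mp h).1⟩

lemma ancestor_total {u w1 w2 : V} (h1 : T.Ancestor w1 u) (h2 : T.Ancestor w2 u) :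
    T.Ancestor w1 w2 ∨ T.Ancestor w2 w1 := by
  obtain ⟨n1, hn1⟩ := h1; obtain ⟨n2, hn2⟩ := h2
  rcases le_total n1 n2 with h | h
  · exact Or.inr ⟨n2 - n1, by
      rw [← hn1, ← Function.iterate_add_apply, Nat.sub_add_cancel h, hn2]⟩
  · exact Or.inl ⟨n1 - n2, by
      rw [← hn2, ← Function.iterate_add_apply, Nat.sub_add_cancel h, hn1]⟩

lemma desc_ssubset_of_child {v w : V} (h : w ∈ T.children v) : T.desc w ⊂ T.desc v := by
  have hvw : T.Ancestor v w := T.ancestor_of_child h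
  have hd := T.child_depth h
  have hsub : T.desc w ⊆ T.desc v := by
    intro u hu
    exact T.mem_desc.mpr (T.ancestor_trans hvw (T.mem_desc.mp hu))
  rw [Finset.ssubset_def]
  refine ⟨hsub, fun hsub' => ?_⟩
  have hv : v ∈ T.desc w := hsub' (T.mem_desc.mpr (T.ancestor_refl v))
  have hwv : T.Ancestor w v := T.mem_desc.mp hv
  by_cases hwe : w = v
  · rw [hwe] at hd; omega
  · have := T.depth_lt hwv hwe
    omega

lemma desc_disjoint_children {v w1 w2 : V} (h1 : w1 ∈ T.children v) (h2 : w2 ∈ T.children v)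
    (hne : w1 ≠ w2) : Disjoint (T.desc w1) (T.desc w2) := by
  rw [Finset.disjoint_left]
  intro u hu1 hu2
  rw [T.mem_desc] at hu1 hu2
  have hd1 := T.child_depth h1
  have hd2 := T.child_depth h2
  rcases T.ancestor_total hu1 hu2 with h | h
  · have := T.depth_lt h hne; omega
  · have := T.depth_lt h hne.symm; omega

lemma exists_child_of_desc {v a : V} (h : T.Ancestor v a) (hne : a ≠ v) :
    ∃ w ∈ T.children v, T.Ancestor w a := by
  classical
  have hex : ∃ n, T.parent^[n] a = v := h
  have hspec : T.parent^[Nat.find hex] a = v := Nat.find_spec hex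
  have hn0 : Nat.find hex ≠ 0 := by
    intro h0
    rw [h0] at hspec
    exact hne hspec
  obtain ⟨m, hm⟩ := Nat.exists_eq_succ_of_ne_zero hn0
  refine ⟨T.parent^[m] a, ?_, ⟨m, rfl⟩⟩
  rw [T.mem_children]
  constructor
  · have hm' : Nat.find hex = m + 1 := by omega
    have hs : T.parent^[m + 1] a = v := by rw [← hm']; exact hspec
    rw [Function.iterate_succ_apply'] at hs
    exact hs
  · intro hroot
    have hv : v = T.root := by
      rw [← hspec, hm, Function.iterate_succ_apply', hroot, T.parent_root]
    have hmv : T.parent^[m] a = v := by rw [hroot, hv]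
    have hfind : Nat.find hex ≤ m := Nat.find_le hmv
    omega

lemma antichain_sum_le (α : V → ℝ≥0) (hLB : T.LocalBonferroni α) :
    ∀ (n : ℕ) (v : V) (A : Finset V), (T.desc v).card ≤ n → T.IsAntichainTree A →
      A ⊆ T.desc v → ∑ a ∈ A, α a ≤ α v := by
  classical
  intro n
  induction n with
  | zero =>
    intro v A hcard _ _
    have : v ∈ T.desc v := T.mem_desc.mpr (T.ancestor_refl v)
    have := Finset.card_pos.mpr ⟨v, this⟩
    omega
  | succ n ih =>
    intro v A hcard hanti hsub
    by_cases hvA : v ∈ A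
    · have hAv : A = {v} := by
        apply Finset.eq_singleton_iff_unique_mem.mpr
        refine ⟨hvA, fun a ha => ?_⟩
        by_contra hne
        exact hanti v hvA a ha (Ne.symm hne) (T.mem_desc.mp (hsub ha))
      simp [hAv]
    · rcases A.eq_empty_or_nonempty with rfl | hA
      · simp
      have hchild : ∀ a ∈ A, ∃ w ∈ T.children v, a ∈ T.desc w := by
        intro a ha
        have hva : T.Ancestor v a := T.mem_desc.mp (hsub ha)
        have hne : a ≠ v := fun h => hvA (h ▸ ha)
        obtain ⟨w, hw, hwa⟩ := T.exists_child_of_desc hva hne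
        exact ⟨w, hw, T.mem_desc.mpr hwa⟩
      have hnotleaf : ¬ T.IsLeaf v := by
        obtain ⟨a, ha⟩ := hA
        obtain ⟨w, hw, _⟩ := hchild a ha
        intro hleaf
        rw [IsLeaf] at hleaf
        simp [hleaf] at hw
      set B : V → Finset V := fun w => A.filter (fun a => a ∈ T.desc w) with hB
      have hAeq : A = (T.children v).biUnion B := by
        apply Finset.Subset.antisymm
        · intro a ha
          obtain ⟨w, hw, hwa⟩ := hchild a ha
          exact Finset.mem_biUnion.mpr ⟨w, hw, Finset.mem_filter.mpr ⟨ha, hwa⟩⟩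
        · intro a ha
          obtain ⟨w, _, hwa⟩ := Finset.mem_biUnion.mp ha
          exact (Finset.mem_filter.mp hwa).1
      have hdisj : Set.PairwiseDisjoint (↑(T.children v)) B := by
        intro w1 hw1 w2 hw2 hne
        have hd := T.desc_disjoint_children hw1 hw2 hne
        refine Finset.disjoint_left.mpr fun a ha1 ha2 => ?_
        exact Finset.disjoint_left.mp hd (Finset.mem_filter.mp ha1).2
          (Finset.mem_filter.mp ha2).2
      calc ∑ a ∈ A, α a = ∑ w ∈ T.children v, ∑ a ∈ B w, α a := by
            rw [hAeq, Finset.sum_biUnion hdisj]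
        _ ≤ ∑ w ∈ T.children v, α w := by
            refine Finset.sum_le_sum fun w hw => ?_
            have hss := T.desc_ssubset_of_child hw
            have hcard' : (T.desc w).card ≤ n := by
              have := Finset.card_lt_card hss
              omega
            refine ih w (B w) hcard' ?_ ?_
            · intro a ha b hb hne
              exact hanti a (Finset.mem_filter.mp ha).1 b (Finset.mem_filter.mp hb).1 hne
            · intro a ha
              exact (Finset.mem_filter.mp ha).2
        _ ≤ α v := hLB v hnotleaf

lemma mem_firstTrue {t : V → Bool} {v : V} :
    v ∈ T.firstTrue t ↔ t v = true ∧ ∀ u, T.ProperAncestor u v → t u = false := by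
  have h := @Finset.mem_filter V
    (fun v => t v = true ∧ ∀ u, T.ProperAncestor u v → t u = false)
    (Classical.decPred _) Finset.univ v
  simp only [Finset.mem_univ, true_and] at h
  exact h

end CaDTree

/-- the CaD procedure controls the familywise error at level
`α(root)` under the local Bonferroni condition. -/
theorem cad_familywise_error {V : Type} [Fintype V] [DecidableEq V]
    (T : CaDTree V) (α : V → ℝ≥0) (hLB : T.LocalBonferroni α)
    {Ω : Type} [MeasurableSpace Ω] (P : Measure Ω) [IsProbabilityMeasure P]
    (R : V → Set Ω) (hR : ∀ v, MeasurableSet (R v)) (t : V → Bool)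
    (hlevel : ∀ v, t v = true → P (R v) ≤ α v) :
    P {ω | ∃ v, t v = true ∧ ∀ u, T.Ancestor u v → ω ∈ R u} ≤ α T.root := by
  classical
  set A := T.firstTrue t with hA
  have hanti : T.IsAntichainTree A := by
    intro u hu v hv hne hanc
    rw [hA, T.mem_firstTrue] at hu hv
    have := hv.2 u ⟨hanc, hne⟩
    rw [hu.1] at this
    exact Bool.true_eq_false.mp this
  have hsub : {ω | ∃ v, t v = true ∧ ∀ u, T.Ancestor u v → ω ∈ R u} ⊆ ⋃ a ∈ A, R a := by
    rintro ω ⟨v, htv, hrej⟩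
    obtain ⟨u0, hu0mem, hu0min⟩ := Finset.exists_min_image
      (Finset.univ.filter (fun u => T.Ancestor u v ∧ t u = true)) T.depth
      ⟨v, by simp [T.ancestor_refl, htv]⟩
    simp only [Finset.mem_filter, Finset.mem_univ, true_and] at hu0mem
    have hu0A : u0 ∈ A := by
      rw [hA, T.mem_firstTrue]
      refine ⟨hu0mem.2, fun u hu => ?_⟩
      by_contra htu
      have htu' : t u = true := by
        cases h : t u with
        | false => exact absurd h htu
        | true => rfl
      have humem : u ∈ Finset.univ.filter (fun u => T.Ancestor u v ∧ t u = true) := by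
        simp only [Finset.mem_filter, Finset.mem_univ, true_and]
        exact ⟨T.ancestor_trans hu.1 hu0mem.1, htu'⟩
      have hle := hu0min u humem
      have hlt := T.depth_lt hu.1 hu.2
      omega
    exact Set.mem_biUnion hu0A (hrej u0 hu0mem.1)
  have hAdesc : A ⊆ T.desc T.root := fun a _ =>
    T.mem_desc.mpr (T.reaches_root a)
  have hAtrue : ∀ a ∈ A, t a = true := fun a ha => ((T.mem_firstTrue).mp ha).1
  calc P {ω | ∃ v, t v = true ∧ ∀ u, T.Ancestor u v → ω ∈ R u}
      ≤ P (⋃ a ∈ A, R a) := measure_mono hsub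
    _ ≤ ∑ a ∈ A, P (R a) := measure_biUnion_finset_le A R
    _ ≤ ∑ a ∈ A, (α a : ℝ≥0∞) := Finset.sum_le_sum fun a ha => hlevel a (hAtrue a ha)
    _ = ((∑ a ∈ A, α a : ℝ≥0) : ℝ≥0∞) := by rw [ENNReal.coe_finset_sum]
    _ ≤ (α T.root : ℝ≥0∞) := by
        rw [ENNReal.coe_le_coe]
        exact T.antichain_sum_le α hLB (T.desc T.root).card T.root A le_rfl hanti hAdesc
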